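/- On the finite-particle subspace of the bosonic Fock space, for f, g in the one-particle Hilbert space, the canonical commutation relations hold: [a(f), a(g)] = 0, [a†(f), a†(g)] = 0, and [a(f), a†(g)] = ⟨\bar f, g⟩ · 1. -/

import Mathlib

open MeasureTheory

/-- Annihilation operator on the concrete bosonic Fock space over `L²(α, μ)`. -/
noncomputable def fockAnn {α : Type*} [MeasurableSpace α] (μ : Measure α)
    (f : α → ℂ) (Φ : ∀ n : ℕ, (Fin n → α) → ℂ) (n : ℕ) (ks : Fin n → α) : ℂ :=
  (Real.sqrt (n + 1) : ℂ) * ∫ x, f x * Φ (n + 1) (Fin.cons x ks) ∂μ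

/-- Creation operator `(a†(f)Φ)^{(n)} = √n Sₙ(f ⊗ Φ^{(n-1)})`. -/
noncomputable def fockCre {α : Type*} (f : α → ℂ)
    (Φ : ∀ n : ℕ, (Fin n → α) → ℂ) : ∀ n : ℕ, (Fin n → α) → ℂ
  | 0, _ => 0
  | (m + 1), k =>
      ((Real.sqrt (m + 1) / (Nat.factorial (m + 1)) : ℝ) : ℂ) *
        ∑ σ : Equiv.Perm (Fin (m + 1)), f (k (σ 0)) * Φ m fun i => k (σ i.succ)


section Helpers
variable {α : Type*}

lemma range_comp_perm {m N : ℕ} {E E' : Fin m → Fin N}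
    (hE : Function.Injective E) (hE' : Function.Injective E')
    (h : Set.range E = Set.range E') :
    ∃ ρ : Equiv.Perm (Fin m), E' = E ∘ ρ := by
  refine ⟨(Equiv.ofInjective E' hE').trans ((Equiv.setCongr h.symm).trans
    (Equiv.ofInjective E hE).symm), ?_⟩
  funext i
  simp only [Function.comp_apply, Equiv.trans_apply]
  rw [Equiv.apply_ofInjective_symm hE]
  rfl

/-- `cons x (k ∘ swap 0 p ∘ succ) = update k p x ∘ swap 0 p`. -/
lemma cons_swap_eq_update_comp {m : ℕ} (k : Fin (m + 1) → α) (p : Fin (m + 1)) (x : α) :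
    Fin.cons x (fun i => k (Equiv.swap 0 p i.succ)) =
      (Function.update k p x) ∘ (Equiv.swap 0 p) := by
  funext t
  induction t using Fin.cases with
  | zero =>
      show x = Function.update k p x ((Equiv.swap 0 p) 0)
      rw [Equiv.swap_apply_left, Function.update_self]
  | succ i =>
      have h1 : (Equiv.swap (0 : Fin (m+1)) p) i.succ ≠ p := by
        intro h
        have := (Equiv.swap (0 : Fin (m+1)) p).injective (a₁ := i.succ) (a₂ := 0)
          (by rw [h, Equiv.swap_apply_left])
        exact Fin.succ_ne_zero i this
      simp [Function.update_of_ne h1]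

/-- The permuted-cons identity for part 3 second formula. -/
lemma update_eq_cons_comp {m : ℕ} (k : Fin (m + 1) → α) (p : Fin (m + 1)) (x : α) :
    Function.update k p x =
      (Fin.cons x (fun i => k (Equiv.swap 0 p i.succ))) ∘ (Equiv.swap 0 p) := by
  rw [cons_swap_eq_update_comp]
  funext t
  show _ = Function.update k p x ((Equiv.swap 0 p) ((Equiv.swap 0 p) t))
  rw [Equiv.swap_apply_self]

end Helpers

section Helpers2
variable {α : Type*}

lemma cons_comp_perm {n : ℕ} (x : α) (k : Fin n → α) (σ : Equiv.Perm (Fin n)) :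
    Fin.cons x (k ∘ σ) =
      (Fin.cons x k) ∘ (Equiv.Perm.decomposeFin.symm (0, σ)) := by
  funext t
  simp only [Function.comp_apply]
  induction t using Fin.cases with
  | zero =>
      rw [Fin.cons_zero, Equiv.Perm.decomposeFin_symm_apply_zero, Fin.cons_zero]
  | succ i =>
      rw [Fin.cons_succ, Equiv.Perm.decomposeFin_symm_apply_succ, Equiv.swap_self,
        Equiv.refl_apply, Fin.cons_succ, Function.comp_apply]

lemma fockCre_symm (f : α → ℂ) (Φ : ∀ n : ℕ, (Fin n → α) → ℂ)
    (n : ℕ) (σ : Equiv.Perm (Fin n)) (k : Fin n → α) :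
    fockCre f Φ n (k ∘ σ) = fockCre f Φ n k := by
  cases n with
  | zero => rfl
  | succ m =>
      show (_ : ℂ) * _ = (_ : ℂ) * _
      congr 1
      rw [← Equiv.sum_comp (Equiv.mulLeft σ)
        (fun τ => f (k (τ 0)) * Φ m fun i => k (τ i.succ))]
      apply Finset.sum_congr rfl
      intro σ' _
      simp [Equiv.Perm.mul_apply, Function.comp]

lemma fockAnn_symm [MeasurableSpace α] (μ : Measure α) (f : α → ℂ)
    (Φ : ∀ n : ℕ, (Fin n → α) → ℂ)
    (hΦsym : ∀ n (σ : Equiv.Perm (Fin n)) (k : Fin n → α), Φ n (k ∘ σ) = Φ n k)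
    (n : ℕ) (σ : Equiv.Perm (Fin n)) (k : Fin n → α) :
    fockAnn μ f Φ n (k ∘ σ) = fockAnn μ f Φ n k := by
  unfold fockAnn
  congr 1
  refine integral_congr_ae (Filter.Eventually.of_forall fun x => ?_)
  dsimp only
  rw [cons_comp_perm, hΦsym]

lemma fockCre_canon (f : α → ℂ) (Φ : ∀ n : ℕ, (Fin n → α) → ℂ) (m : ℕ)
    (hsym : ∀ (σ : Equiv.Perm (Fin m)) (k : Fin m → α), Φ m (k ∘ σ) = Φ m k)
    (k : Fin (m + 1) → α) :
    fockCre f Φ (m + 1) k = ((Real.sqrt (m + 1) / (m + 1) : ℝ) : ℂ) *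
      ∑ p : Fin (m + 1), f (k p) * Φ m (fun i => k (Equiv.swap 0 p i.succ)) := by
  show ((Real.sqrt (m + 1) / (Nat.factorial (m + 1)) : ℝ) : ℂ) * _ = _
  rw [← Equiv.sum_comp Equiv.Perm.decomposeFin.symm
      (fun σ => f (k (σ 0)) * Φ m fun i => k (σ i.succ))]
  have hterm : ∀ pe : Fin (m + 1) × Equiv.Perm (Fin m),
      f (k ((Equiv.Perm.decomposeFin.symm pe) 0)) *
        Φ m (fun i => k ((Equiv.Perm.decomposeFin.symm pe) i.succ))
      = f (k pe.1) * Φ m (fun i => k (Equiv.swap 0 pe.1 i.succ)) := by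
    rintro ⟨p, e⟩
    rw [Equiv.Perm.decomposeFin_symm_apply_zero]
    congr 1
    have h2 : (fun i => k ((Equiv.Perm.decomposeFin.symm (p, e)) i.succ))
        = (fun i => k (Equiv.swap 0 p i.succ)) ∘ e := by
      funext i
      simp [Equiv.Perm.decomposeFin_symm_apply_succ]
    rw [h2, hsym]
  rw [Finset.sum_congr rfl (fun pe _ => hterm pe)]
  rw [Fintype.sum_prod_type]
  simp only [Finset.sum_const, Finset.card_univ, Fintype.card_perm, Fintype.card_fin]
  simp only [nsmul_eq_mul, Finset.mul_sum]
  refine Finset.sum_congr rfl fun p _ => ?_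
  rw [← mul_assoc]
  congr 1
  rw [← Complex.ofReal_natCast (Nat.factorial m), ← Complex.ofReal_mul,
    Complex.ofReal_inj]
  have hm : (Nat.factorial m : ℝ) ≠ 0 := Nat.cast_ne_zero.mpr (Nat.factorial_ne_zero m)
  have hm1 : ((m : ℝ) + 1) ≠ 0 := by positivity
  rw [Nat.factorial_succ]
  push_cast
  field_simp

end Helpers2

section Helpers3
variable {α : Type*}

lemma cons_swap_succ {n : ℕ} (x : α) (k : Fin n → α) (j : Fin n) :
    (fun i => (Fin.cons x k : Fin (n+1) → α) (Equiv.swap 0 j.succ i.succ)) =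
      Function.update k j x := by
  funext i
  by_cases h : i = j
  · subst h
    rw [Equiv.swap_apply_right, Fin.cons_zero, Function.update_self]
  · rw [Equiv.swap_apply_of_ne_of_ne (Fin.succ_ne_zero i)
      (fun hc => h (Fin.succ_injective _ hc)), Fin.cons_succ,
      Function.update_of_ne h]

/-- Key pointwise formula: `(a†(g)Φ)^{(n+1)}(x,k) = c·(g x Φ k + Σⱼ g(kⱼ) Φ(k[j:=x]))`. -/
lemma fockCre_cons (g : α → ℂ) (Φ : ∀ n : ℕ, (Fin n → α) → ℂ) (n : ℕ)
    (hsym : ∀ (σ : Equiv.Perm (Fin n)) (k : Fin n → α), Φ n (k ∘ σ) = Φ n k)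
    (x : α) (k : Fin n → α) :
    fockCre g Φ (n + 1) (Fin.cons x k) = ((Real.sqrt (n + 1) / (n + 1) : ℝ) : ℂ) *
      (g x * Φ n k + ∑ j : Fin n, g (k j) * Φ n (Function.update k j x)) := by
  rw [fockCre_canon g Φ n hsym (Fin.cons x k), Fin.sum_univ_succ]
  congr 1
  have h0 : (fun i => (Fin.cons x k : Fin (n+1) → α) ((Equiv.swap (0 : Fin (n+1)) 0) i.succ))
      = k := by
    funext i
    rw [Equiv.swap_self, Equiv.refl_apply, Fin.cons_succ]
  rw [Fin.cons_zero, h0]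
  congr 1
  refine Finset.sum_congr rfl fun j _ => ?_
  rw [Fin.cons_succ, cons_swap_succ]

end Helpers3

section Part3
variable {α : Type*} [MeasurableSpace α] {μ : Measure α}

lemma part3 (f g : α → ℂ)
    (hfg : Integrable (fun x => f x * g x) μ)
    (Φ : ∀ n : ℕ, (Fin n → α) → ℂ)
    (hΦsym : ∀ n (σ : Equiv.Perm (Fin n)) (k : Fin n → α), Φ n (k ∘ σ) = Φ n k)
    (hint₁ : ∀ n (k : Fin n → α),
        Integrable (fun x => f x * Φ (n + 1) (Fin.cons x k)) μ)
    (hint₅ : ∀ n (k : Fin n → α),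
        Integrable (fun x => f x * fockCre g Φ (n + 1) (Fin.cons x k)) μ)
    (n : ℕ) (k : Fin n → α) :
    fockAnn μ f (fockCre g Φ) n k - fockCre g (fockAnn μ f Φ) n k
      = (∫ x, f x * g x ∂μ) * Φ n k := by
  have hpos : (0:ℝ) ≤ (n:ℝ) + 1 := by positivity
  have hc1 : ((Real.sqrt ((n:ℝ) + 1) : ℂ)) * ((Real.sqrt ((n:ℝ)+1) / ((n:ℝ)+1) : ℝ) : ℂ) = 1 := by
    rw [← Complex.ofReal_mul, mul_div_assoc', Real.mul_self_sqrt hpos, div_self (by positivity)]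
    norm_num
  set S : α → ℂ := fun x => ∑ j : Fin n, g (k j) * Φ n (Function.update k j x) with hS
  have hcre : ∀ x, fockCre g Φ (n + 1) (Fin.cons x k)
      = ((Real.sqrt ((n:ℝ) + 1) / ((n:ℝ) + 1) : ℝ) : ℂ) * (g x * Φ n k + S x) :=
    fun x => fockCre_cons g Φ n (hΦsym n) x k
  have hjint : ∀ j : Fin n, Integrable (fun x => f x * Φ n (Function.update k j x)) μ := by
    intro j
    obtain ⟨m, rfl⟩ := Nat.exists_eq_succ_of_ne_zero (Nat.pos_iff_ne_zero.mp j.pos)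
    have heq : ∀ x, Φ (m + 1) (Function.update k j x)
        = Φ (m + 1) (Fin.cons x (fun i => k (Equiv.swap 0 j i.succ))) := by
      intro x
      rw [update_eq_cons_comp]
      exact hΦsym _ _ _
    simpa only [heq] using hint₁ m (fun i => k (Equiv.swap 0 j i.succ))
  have hT1 : Integrable (fun x => f x * (g x * Φ n k)) μ :=
    (hfg.mul_const (Φ n k)).congr (Filter.Eventually.of_forall fun x => by ring)
  have hT2 : Integrable (fun x => f x * S x) μ := by
    have : Integrable (fun x => ∑ j : Fin n, g (k j) * (f x * Φ n (Function.update k j x))) μ :=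
      integrable_finset_sum _ (fun j _ => (hjint j).const_mul (g (k j)))
    exact this.congr (Filter.Eventually.of_forall fun x => by
      simp only [hS, Finset.mul_sum]
      exact Finset.sum_congr rfl fun j _ => by ring)
  have hLHS : fockAnn μ f (fockCre g Φ) n k
      = (∫ x, f x * g x ∂μ) * Φ n k
        + ∑ j : Fin n, g (k j) * ∫ x, f x * Φ n (Function.update k j x) ∂μ := by
    unfold fockAnn
    have h1 : (∫ x, f x * fockCre g Φ (n + 1) (Fin.cons x k) ∂μ)
        = ((Real.sqrt ((n:ℝ) + 1) / ((n:ℝ) + 1) : ℝ) : ℂ)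
            * ∫ x, f x * (g x * Φ n k) + f x * S x ∂μ := by
      rw [← integral_const_mul]
      refine integral_congr_ae (Filter.Eventually.of_forall fun x => ?_)
      dsimp only
      rw [hcre x]
      ring
    push_cast
    rw [h1, ← mul_assoc, hc1, one_mul, integral_add hT1 hT2]
    congr 1
    · rw [show (fun x => f x * (g x * Φ n k)) = fun x => (f x * g x) * Φ n k from
        funext fun x => by ring, integral_mul_const]
    · rw [show (fun x => f x * S x)
          = fun x => ∑ j : Fin n, g (k j) * (f x * Φ n (Function.update k j x)) from
        funext fun x => by
          simp only [hS, Finset.mul_sum]; exact Finset.sum_congr rfl fun j _ => by ring,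
        integral_finset_sum _ (fun j _ => (hjint j).const_mul (g (k j)))]
      exact Finset.sum_congr rfl fun j _ => integral_const_mul _ _
  have hRHS : fockCre g (fockAnn μ f Φ) n k
      = ∑ j : Fin n, g (k j) * ∫ x, f x * Φ n (Function.update k j x) ∂μ := by
    cases n with
    | zero => simp [fockCre]
    | succ m =>
      rw [fockCre_canon g (fockAnn μ f Φ) m (fun σ k' => fockAnn_symm μ f Φ hΦsym m σ k') k,
        Finset.mul_sum]
      refine Finset.sum_congr rfl fun p _ => ?_
      unfold fockAnn
      have h2 : (∫ x, f x * Φ (m + 1) (Fin.cons x (fun i => k (Equiv.swap 0 p i.succ))) ∂μ)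
          = ∫ x, f x * Φ (m + 1) (Function.update k p x) ∂μ := by
        refine integral_congr_ae (Filter.Eventually.of_forall fun x => ?_)
        dsimp only
        rw [cons_swap_eq_update_comp, hΦsym]
      rw [h2]
      have hne : ((m:ℂ) + 1) ≠ 0 := Nat.cast_add_one_ne_zero m
      have hsq : ((Real.sqrt ((m:ℝ)+1) : ℝ) : ℂ) * ((Real.sqrt ((m:ℝ)+1) : ℝ) : ℂ)
          = (m:ℂ) + 1 := by
        rw [← Complex.ofReal_mul, Real.mul_self_sqrt (by positivity)]
        push_cast
        ring
      push_cast
      field_simp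
      linear_combination (g (k p) * (∫ x, f x * Φ (m+1) (Function.update k p x) ∂μ)) * hsq
  rw [hLHS, hRHS]
  ring

end Part3

section Part1
variable {α : Type*} [MeasurableSpace α] {μ : Measure α}

lemma cons_cons_swap {n : ℕ} (x y : α) (k : Fin n → α) :
    (Fin.cons y (Fin.cons x k) : Fin (n + 2) → α)
      = (Fin.cons x (Fin.cons y k) : Fin (n + 2) → α) ∘ (Equiv.swap 0 1) := by
  funext t
  simp only [Function.comp_apply]
  induction t using Fin.cases with
  | zero =>
      rw [Fin.cons_zero, Equiv.swap_apply_left,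
        show (1 : Fin (n + 2)) = (0 : Fin (n + 1)).succ from rfl, Fin.cons_succ, Fin.cons_zero]
  | succ i =>
      induction i using Fin.cases with
      | zero =>
          rw [Fin.cons_succ, Fin.cons_zero, Fin.succ_zero_eq_one, Equiv.swap_apply_right,
            Fin.cons_zero]
      | succ j =>
          have h1 : (j.succ.succ : Fin (n + 2)) ≠ 0 := Fin.succ_ne_zero _
          have h2 : (j.succ.succ : Fin (n + 2)) ≠ 1 := by
            rw [show (1 : Fin (n + 2)) = (0 : Fin (n + 1)).succ from rfl]
            exact fun hc => Fin.succ_ne_zero j (Fin.succ_injective _ hc)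
          rw [Fin.cons_succ, Fin.cons_succ, Equiv.swap_apply_of_ne_of_ne h1 h2,
            Fin.cons_succ, Fin.cons_succ]

lemma part1 [SigmaFinite μ] (f g : α → ℂ)
    (Φ : ∀ n : ℕ, (Fin n → α) → ℂ)
    (hΦsym : ∀ n (σ : Equiv.Perm (Fin n)) (k : Fin n → α), Φ n (k ∘ σ) = Φ n k)
    (hint₆ : ∀ n (k : Fin n → α),
        Integrable (fun p : α × α =>
          f p.1 * g p.2 * Φ (n + 2) (Fin.cons p.1 (Fin.cons p.2 k))) (μ.prod μ))
    (n : ℕ) (k : Fin n → α) :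
    fockAnn μ f (fockAnn μ g Φ) n k - fockAnn μ g (fockAnn μ f Φ) n k = 0 := by
  have hsw : ∀ (x y : α), Φ (n + 2) (Fin.cons y (Fin.cons x k))
      = Φ (n + 2) (Fin.cons x (Fin.cons y k)) := by
    intro x y
    rw [cons_cons_swap, hΦsym]
  set H : α → α → ℂ := fun a b => f a * g b * Φ (n + 2) (Fin.cons a (Fin.cons b k)) with hH
  have repr : ∀ (F G : α → ℂ),
      fockAnn μ F (fockAnn μ G Φ) n k
      = ((Real.sqrt ((n:ℝ) + 1) : ℝ) : ℂ) * (((Real.sqrt ((n:ℝ) + 1 + 1) : ℝ)) : ℂ) *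
          ∫ x, ∫ y, F x * G y * Φ (n + 2) (Fin.cons y (Fin.cons x k)) ∂μ ∂μ := by
    intro F G
    unfold fockAnn
    push_cast
    rw [mul_assoc]
    congr 1
    rw [← integral_const_mul]
    refine integral_congr_ae (Filter.Eventually.of_forall fun x => ?_)
    dsimp only
    rw [show (fun y => F x * G y * Φ (n + 2) (Fin.cons y (Fin.cons x k)))
        = fun y => F x * (G y * Φ (n + 2) (Fin.cons y (Fin.cons x k))) from
      funext fun y => mul_assoc _ _ _, integral_const_mul]
    ring
  have hI : Integrable (Function.uncurry H) (μ.prod μ) := hint₆ n k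
  have hA : fockAnn μ f (fockAnn μ g Φ) n k
      = ((Real.sqrt ((n:ℝ) + 1) : ℝ) : ℂ) * (((Real.sqrt ((n:ℝ) + 1 + 1) : ℝ)) : ℂ) *
          ∫ x, ∫ y, H x y ∂μ ∂μ := by
    rw [repr f g]
    congr 1
    refine integral_congr_ae (Filter.Eventually.of_forall fun x => ?_)
    refine integral_congr_ae (Filter.Eventually.of_forall fun y => ?_)
    dsimp only [hH]
    rw [hsw]
  have hB : fockAnn μ g (fockAnn μ f Φ) n k
      = ((Real.sqrt ((n:ℝ) + 1) : ℝ) : ℂ) * (((Real.sqrt ((n:ℝ) + 1 + 1) : ℝ)) : ℂ) *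
          ∫ x, ∫ y, H y x ∂μ ∂μ := by
    rw [repr g f]
    congr 1
    refine integral_congr_ae (Filter.Eventually.of_forall fun x => ?_)
    refine integral_congr_ae (Filter.Eventually.of_forall fun y => ?_)
    dsimp only [hH]
    ring
  rw [hA, hB, sub_eq_zero]
  congr 1
  have hswap : Integrable (Function.uncurry fun x y => H y x) (μ.prod μ) := hI.swap
  exact (integral_integral_swap hswap).symm

end Part1

section Part2
variable {α : Type*}

private def Qm {m : ℕ} (p : Fin (m + 2)) (q : Fin (m + 1)) : Fin (m + 2) :=
  Equiv.swap 0 p q.succ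

private def Em {m : ℕ} (p : Fin (m + 2)) (q : Fin (m + 1)) : Fin m → Fin (m + 2) :=
  fun i => Equiv.swap 0 p ((Equiv.swap 0 q i.succ).succ)

lemma Qm_ne {m : ℕ} (p : Fin (m + 2)) (q : Fin (m + 1)) : Qm p q ≠ p := by
  intro h
  have h2 : (Equiv.swap (0 : Fin (m+2)) p) q.succ = (Equiv.swap (0 : Fin (m+2)) p) 0 := by
    rw [Equiv.swap_apply_left]; exact h
  exact Fin.succ_ne_zero q ((Equiv.swap (0 : Fin (m+2)) p).injective h2)

lemma swapQ_ne_zero {m : ℕ} (p : Fin (m + 2)) (q : Fin (m + 1)) :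
    Equiv.swap 0 (Qm p q) p ≠ 0 := by
  intro h
  have h2 : (Equiv.swap (0 : Fin (m+2)) (Qm p q)) p
      = (Equiv.swap (0 : Fin (m+2)) (Qm p q)) (Qm p q) := by
    rw [Equiv.swap_apply_right]; exact h
  exact (Qm_ne p q) ((Equiv.swap (0 : Fin (m+2)) (Qm p q)).injective h2).symm

private def phi {m : ℕ} (pq : Fin (m + 2) × Fin (m + 1)) : Fin (m + 2) × Fin (m + 1) :=
  (Qm pq.1 pq.2, (Equiv.swap 0 (Qm pq.1 pq.2) pq.1).pred (swapQ_ne_zero pq.1 pq.2))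

lemma Qm_phi {m : ℕ} (pq : Fin (m + 2) × Fin (m + 1)) :
    Qm (phi pq).1 (phi pq).2 = pq.1 := by
  have h1 : (phi pq).2.succ = Equiv.swap 0 (Qm pq.1 pq.2) pq.1 := Fin.succ_pred _ (swapQ_ne_zero pq.1 pq.2)
  show Equiv.swap 0 (phi pq).1 (phi pq).2.succ = pq.1
  rw [h1]
  show Equiv.swap 0 (Qm pq.1 pq.2) (Equiv.swap 0 (Qm pq.1 pq.2) pq.1) = pq.1
  exact Equiv.swap_apply_self _ _ _

lemma phi_involutive {m : ℕ} : Function.Involutive (phi (m := m)) := by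
  intro pq
  refine Prod.ext (Qm_phi pq) (Fin.succ_injective _ ?_)
  have h3 : (phi (phi pq)).2.succ
      = Equiv.swap 0 (Qm (phi pq).1 (phi pq).2) (phi pq).1 := Fin.succ_pred _ (swapQ_ne_zero (phi pq).1 (phi pq).2)
  rw [h3, Qm_phi pq]
  show Equiv.swap 0 pq.1 (Qm pq.1 pq.2) = pq.2.succ
  show Equiv.swap 0 pq.1 (Equiv.swap 0 pq.1 pq.2.succ) = pq.2.succ
  exact Equiv.swap_apply_self _ _ _

lemma Em_injective {m : ℕ} (p : Fin (m + 2)) (q : Fin (m + 1)) :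
    Function.Injective (Em p q) := by
  intro i j h
  have h1 := (Equiv.swap (0 : Fin (m+2)) p).injective h
  have h2 := Fin.succ_injective _ h1
  have h3 := (Equiv.swap (0 : Fin (m+1)) q).injective h2
  exact Fin.succ_injective _ h3

lemma Em_ne_p {m : ℕ} (p : Fin (m + 2)) (q : Fin (m + 1)) (i : Fin m) :
    Em p q i ≠ p := by
  intro h
  have h2 : (Equiv.swap (0 : Fin (m+2)) p) ((Equiv.swap 0 q i.succ).succ)
      = (Equiv.swap (0 : Fin (m+2)) p) 0 := by rw [Equiv.swap_apply_left]; exact h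
  exact Fin.succ_ne_zero _ ((Equiv.swap (0 : Fin (m+2)) p).injective h2)

lemma Em_ne_Q {m : ℕ} (p : Fin (m + 2)) (q : Fin (m + 1)) (i : Fin m) :
    Em p q i ≠ Qm p q := by
  intro h
  have h1 := (Equiv.swap (0 : Fin (m+2)) p).injective h
  have h2 := Fin.succ_injective _ h1
  have h3 : (Equiv.swap (0 : Fin (m+1)) q) i.succ = (Equiv.swap (0 : Fin (m+1)) q) 0 := by
    rw [Equiv.swap_apply_left]; exact h2
  exact Fin.succ_ne_zero _ ((Equiv.swap (0 : Fin (m+1)) q).injective h3)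

lemma Em_range {m : ℕ} (p : Fin (m + 2)) (q : Fin (m + 1)) :
    Set.range (Em p q) = (({p, Qm p q} : Finset (Fin (m + 2)))ᶜ : Finset (Fin (m+2))) := by
  have himg : (Finset.univ.image (Em p q)) = ({p, Qm p q} : Finset (Fin (m + 2)))ᶜ := by
    apply Finset.eq_of_subset_of_card_le
    · intro t ht
      rcases Finset.mem_image.mp ht with ⟨i, _, rfl⟩
      rw [Finset.mem_compl]
      intro hmem
      rcases Finset.mem_insert.mp hmem with h | h
      · exact Em_ne_p p q i h
      · exact Em_ne_Q p q i (Finset.mem_singleton.mp h)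
    · rw [Finset.card_image_of_injective _ (Em_injective p q), Finset.card_univ,
        Fintype.card_fin, Finset.card_compl]
      have : ({p, Qm p q} : Finset (Fin (m + 2))).card = 2 := by
        rw [Finset.card_insert_of_notMem (by
          simp only [Finset.mem_singleton]
          exact fun h => Qm_ne p q h.symm), Finset.card_singleton]
      rw [this, Fintype.card_fin]
      omega
  rw [← himg, Finset.coe_image, Finset.coe_univ, Set.image_univ]

end Part2

lemma part2core (f g : α → ℂ) (Φ : ∀ n : ℕ, (Fin n → α) → ℂ)
    (hΦsym : ∀ n (σ : Equiv.Perm (Fin n)) (k : Fin n → α), Φ n (k ∘ σ) = Φ n k)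
    (m : ℕ) (k : Fin (m + 2) → α) :
    ∑ pq : Fin (m + 2) × Fin (m + 1),
        f (k pq.1) * g (k (Qm pq.1 pq.2)) * Φ m (k ∘ Em pq.1 pq.2)
      = ∑ pq : Fin (m + 2) × Fin (m + 1),
        g (k pq.1) * f (k (Qm pq.1 pq.2)) * Φ m (k ∘ Em pq.1 pq.2) := by
  refine Fintype.sum_equiv (Function.Involutive.toPerm phi (phi_involutive (m := m))) _ _
    fun pq => ?_
  have he : (Function.Involutive.toPerm phi (phi_involutive (m := m))) pq = phi pq := rfl
  rw [he]
  have h1 : (phi pq).1 = Qm pq.1 pq.2 := rfl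
  have h2 : Qm (phi pq).1 (phi pq).2 = pq.1 := Qm_phi pq
  have h3 : Φ m (k ∘ Em (phi pq).1 (phi pq).2) = Φ m (k ∘ Em pq.1 pq.2) := by
    obtain ⟨ρ, hρ⟩ := range_comp_perm (Em_injective pq.1 pq.2)
      (Em_injective (phi pq).1 (phi pq).2)
      (by rw [Em_range, Em_range, h2, h1, Finset.pair_comm pq.1 (Qm pq.1 pq.2)])
    rw [hρ]
    show Φ m ((k ∘ Em pq.1 pq.2) ∘ ρ) = Φ m (k ∘ Em pq.1 pq.2)
    exact hΦsym m ρ _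
  rw [h2, h3, h1]
  ring

lemma part2 (f g : α → ℂ) (Φ : ∀ n : ℕ, (Fin n → α) → ℂ)
    (hΦsym : ∀ n (σ : Equiv.Perm (Fin n)) (k : Fin n → α), Φ n (k ∘ σ) = Φ n k)
    (n : ℕ) (k : Fin n → α) :
    fockCre f (fockCre g Φ) n k - fockCre g (fockCre f Φ) n k = 0 := by
  rw [sub_eq_zero]
  revert k
  obtain _ | (_ | m) := n <;> intro k
  · rfl
  · simp [fockCre]
  · have hexp : ∀ (F G : α → ℂ),
        fockCre F (fockCre G Φ) (m + 2) k
        = ((Real.sqrt (((m + 1 : ℕ) : ℝ) + 1) / (((m + 1 : ℕ) : ℝ) + 1) : ℝ) : ℂ)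
            * (((Real.sqrt ((m:ℝ) + 1) / ((m:ℝ) + 1) : ℝ) : ℂ))
            * ∑ pq : Fin (m + 2) × Fin (m + 1),
                F (k pq.1) * G (k (Qm pq.1 pq.2)) * Φ m (k ∘ Em pq.1 pq.2) := by
      intro F G
      rw [fockCre_canon F (fockCre G Φ) (m + 1) (fockCre_symm G Φ (m + 1)) k]
      have hin : ∀ p : Fin (m + 2),
          fockCre G Φ (m + 1) (fun i => k (Equiv.swap 0 p i.succ))
          = (((Real.sqrt ((m:ℝ) + 1) / ((m:ℝ) + 1) : ℝ) : ℂ))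
              * ∑ q : Fin (m + 1), G (k (Qm p q)) * Φ m (k ∘ Em p q) := by
        intro p
        rw [fockCre_canon G Φ m (hΦsym m) _]
        rfl
      simp only [hin]
      rw [Fintype.sum_prod_type]
      simp only [Finset.mul_sum]
      refine Finset.sum_congr rfl fun p _ => Finset.sum_congr rfl fun q _ => by ring
    rw [hexp f g, hexp g f, part2core f g Φ hΦsym m k]



/-- Canonical commutation relations on the finite-particle subspace:
`[a(f), a(g)] = 0`, `[a†(f), a†(g)] = 0`, `[a(f), a†(g)] = ⟨f̄, g⟩ = ∫ f g dμ`. -/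
theorem stmt_10 {α : Type*} [MeasurableSpace α] (μ : Measure α) [SigmaFinite μ]
    (f g : α → ℂ) (hfm : Measurable f) (hgm : Measurable g)
    (hfg : Integrable (fun x => f x * g x) μ)
    (Φ : ∀ n : ℕ, (Fin n → α) → ℂ)
    (hΦm : ∀ n, Measurable (Φ n))
    (hΦsym : ∀ n (σ : Equiv.Perm (Fin n)) (k : Fin n → α), Φ n (k ∘ σ) = Φ n k)
    (hΦfin : ∃ n₀ : ℕ, ∀ n, n₀ ≤ n → Φ n = 0)
    -- integrability hypotheses making all the iterated integrals absolutely convergent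
    (hint₁ : ∀ n (k : Fin n → α),
        Integrable (fun x => f x * Φ (n + 1) (Fin.cons x k)) μ)
    (hint₂ : ∀ n (k : Fin n → α),
        Integrable (fun x => g x * Φ (n + 1) (Fin.cons x k)) μ)
    (hint₃ : ∀ n (k : Fin n → α),
        Integrable (fun x => f x * fockAnn μ g Φ (n + 1) (Fin.cons x k)) μ)
    (hint₄ : ∀ n (k : Fin n → α),
        Integrable (fun x => g x * fockAnn μ f Φ (n + 1) (Fin.cons x k)) μ)
    (hint₅ : ∀ n (k : Fin n → α),
        Integrable (fun x => f x * fockCre g Φ (n + 1) (Fin.cons x k)) μ)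
    (hint₆ : ∀ n (k : Fin n → α),
        Integrable (fun p : α × α =>
          f p.1 * g p.2 * Φ (n + 2) (Fin.cons p.1 (Fin.cons p.2 k))) (μ.prod μ)) :
    (∀ n (k : Fin n → α),
        fockAnn μ f (fockAnn μ g Φ) n k - fockAnn μ g (fockAnn μ f Φ) n k = 0) ∧
    (∀ n (k : Fin n → α),
        fockCre f (fockCre g Φ) n k - fockCre g (fockCre f Φ) n k = 0) ∧
    (∀ n (k : Fin n → α),
        fockAnn μ f (fockCre g Φ) n k - fockCre g (fockAnn μ f Φ) n k
          = (∫ x, f x * g x ∂μ) * Φ n k) := by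
  refine ⟨fun n k => part1 f g Φ hΦsym hint₆ n k,
    fun n k => part2 f g Φ hΦsym n k,
    fun n k => part3 f g hfg Φ hΦsym hint₁ hint₅ n k⟩
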